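/- Let g(x,y,z) = x ∧ (y → z) be the ternary boolean operation (where y → z = ¬y ∨ z), and let S ⊆ {0,1}^n be such that for every i ∈ [n] there exist u, w ∈ S with u_i = 1 and w_i = 0. Then a vector v ∈ {0,1}^n belongs to Cl_{g}(S) if and only if (i) there exists w ∈ S with 𝟙(v) ⊆ 𝟙(w), and (ii) for every pair (k, i) ∈ 𝟙(v) × 𝟘(v) there exists w ∈ S with (w_k, w_i) = (0,1) or (w_k, w_i) = (1,0). -/

import Mathlib

/-- A finitary operation on `D`: an arity `t` together with a function `D^t → D`. -/
abbrev Op (D : Type*) := Σ t : ℕ, (Fin t → D) → D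

/-- The closure of a set `S` of vectors under the coordinatewise application of the
operations in `F`. -/
inductive Cl {D ι : Type*} (F : Set (Op D)) (S : Set (ι → D)) : (ι → D) → Prop
  | base {v : ι → D} : v ∈ S → Cl F S v
  | app {t : ℕ} {f : (Fin t → D) → D} (hf : (⟨t, f⟩ : Op D) ∈ F)
      (vs : Fin t → ι → D) (hvs : ∀ j, Cl F S (vs j)) :
      Cl F S (fun i => f fun j => vs j i)

abbrev gOp : Op Bool := ⟨3, fun x => x 0 && (!x 1 || x 2)⟩

lemma cl_g {n : ℕ} {S : Set (Fin n → Bool)} {a b c : Fin n → Bool}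
    (ha : Cl {gOp} S a) (hb : Cl {gOp} S b) (hc : Cl {gOp} S c) :
    Cl {gOp} S (fun i => a i && (!b i || c i)) := by
  have h := Cl.app (F := ({gOp} : Set (Op Bool))) (S := S)
      (f := fun x : Fin 3 → Bool => x 0 && (!x 1 || x 2)) rfl ![a, b, c] (by
    intro j
    fin_cases j <;> simpa)
  convert h using 2
  rfl

lemma cl_and {n : ℕ} {S : Set (Fin n → Bool)} {a b : Fin n → Bool}
    (ha : Cl {gOp} S a) (hb : Cl {gOp} S b) :
    Cl {gOp} S (fun i => a i && b i) := by
  have h := cl_g ha ha hb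
  have e : (fun i => a i && (!a i || b i)) = fun i => a i && b i :=
    funext fun i => by cases a i <;> cases b i <;> rfl
  rwa [e] at h

theorem closure_impl_iff {n : ℕ} (S : Set (Fin n → Bool))
    (hS : ∀ i : Fin n, (∃ u ∈ S, u i = true) ∧ (∃ w ∈ S, w i = false))
    (v : Fin n → Bool) :
    Cl {(⟨3, fun x => x 0 && (!x 1 || x 2)⟩ : Op Bool)} S v ↔
      ((∃ w ∈ S, ∀ i, v i = true → w i = true) ∧
        ∀ k i : Fin n, v k = true → v i = false →
          ∃ w ∈ S, (w k = false ∧ w i = true) ∨ (w k = true ∧ w i = false)) := by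
  constructor
  · intro h
    induction h with
    | base hv =>
      exact ⟨⟨_, hv, fun i hi => hi⟩, fun k i hk hi => ⟨_, hv, Or.inr ⟨hk, hi⟩⟩⟩
    | app hf vs hvs ih =>
      simp only [Set.mem_singleton_iff] at hf
      injection hf with h1 h2
      subst h1
      rw [heq_iff_eq] at h2
      subst h2
      simp only
      constructor
      · obtain ⟨⟨w, hwS, hw⟩, -⟩ := ih 0
        refine ⟨w, hwS, fun i hi => hw i ?_⟩
        exact (Bool.and_eq_true _ _ |>.mp hi).1
      · intro k i hk hi
        rw [Bool.and_eq_true] at hk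
        obtain ⟨hk0, hk12⟩ := hk
        cases h0 : vs 0 i with
        | false => exact (ih 0).2 k i hk0 h0
        | true =>
          rw [h0] at hi
          simp only [Bool.true_and, Bool.or_eq_false_iff, Bool.not_eq_false'] at hi
          obtain ⟨h1, h2⟩ := hi
          cases hb : vs 1 k with
          | false =>
            obtain ⟨w, hwS, hw⟩ := (ih 1).2 i k h1 hb
            exact ⟨w, hwS, hw.symm.imp (fun ⟨x, y⟩ => ⟨y, x⟩) (fun ⟨x, y⟩ => ⟨y, x⟩)⟩
          | true =>
            rw [hb] at hk12
            simp only [Bool.not_true, Bool.false_or] at hk12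
            exact (ih 2).2 k i hk12 h2
  · rintro ⟨⟨w0, hw0S, hw0⟩, hpair⟩
    have hzk : ∀ k i : Fin n, v k = true → v i = false →
        ∃ z, Cl {gOp} S z ∧ z k = true ∧ z i = false := by
      intro k i hk hi
      obtain ⟨w, hwS, hw⟩ := hpair k i hk hi
      rcases hw with ⟨hwk, hwi⟩ | ⟨hwk, hwi⟩
      · obtain ⟨u, huS, huk⟩ := (hS k).1
        obtain ⟨z', hz'S, hz'i⟩ := (hS i).2
        refine ⟨_, cl_g (Cl.base huS) (Cl.base hwS) (Cl.base hz'S), ?_, ?_⟩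
        · simp [huk, hwk]
        · simp [hwi, hz'i]
      · exact ⟨w, Cl.base hwS, hwk, hwi⟩
    have hcol : ∀ i : Fin n, v i = false →
        ∃ z, Cl {gOp} S z ∧ z i = false ∧ ∀ k, v k = true → z k = true := by
      intro i hi
      have key : ∀ K : Finset (Fin n), ∃ z, Cl {gOp} S z ∧ z i = false ∧
          ∀ k ∈ K, v k = true → z k = true := by
        intro K
        induction K using Finset.induction_on with
        | empty =>
          obtain ⟨w, hwS, hwi⟩ := (hS i).2
          exact ⟨w, Cl.base hwS, hwi, by simp⟩
        | insert _ _ hk ih =>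
          rename_i k K
          obtain ⟨z, hz, hzi, hzK⟩ := ih
          by_cases hvk : v k = true
          · obtain ⟨zk, hzk', hzkk, hzki⟩ := hzk k i hvk hi
            refine ⟨fun j => w0 j && (!(w0 j && (!z j || zk j)) || zk j),
              cl_g (Cl.base hw0S) (cl_g (Cl.base hw0S) hz hzk') hzk', ?_, ?_⟩
            · simp only [hzi, hzki]
              cases w0 i <;> rfl
            · intro k' hk' hvk'
              have hw0k' : w0 k' = true := hw0 k' hvk'
              rcases Finset.mem_insert.mp hk' with rfl | hk'
              · simp [hw0k', hzkk]
              · have hz' := hzK k' hk' hvk'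
                simp only [hw0k', hz', Bool.true_and, Bool.not_false, Bool.true_or]
                cases zk k' <;> rfl
          · refine ⟨z, hz, hzi, ?_⟩
            intro k' hk' hvk'
            rcases Finset.mem_insert.mp hk' with rfl | hk'
            · exact absurd hvk' hvk
            · exact hzK k' hk' hvk'
      obtain ⟨z, h1, h2, h3⟩ := key Finset.univ
      exact ⟨z, h1, h2, fun k hk => h3 k (Finset.mem_univ k) hk⟩
    have key : ∀ K : Finset (Fin n), ∃ z, Cl {gOp} S z ∧
        (∀ k, v k = true → z k = true) ∧ (∀ i ∈ K, v i = false → z i = false) := by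
      intro K
      induction K using Finset.induction_on with
      | empty => exact ⟨w0, Cl.base hw0S, hw0, by simp⟩
      | insert _ _ hi ih =>
        rename_i i K
        obtain ⟨z, hz, hz1, hz0⟩ := ih
        by_cases hvi : v i = false
        · obtain ⟨zi, hzi', hzii, hzi1⟩ := hcol i hvi
          refine ⟨fun j => z j && zi j, cl_and hz hzi', ?_, ?_⟩
          · intro k hk; simp [hz1 k hk, hzi1 k hk]
          · intro i' hi' hvi'
            rcases Finset.mem_insert.mp hi' with rfl | hi'
            · simp [hzii]
            · simp [hz0 i' hi' hvi']
        · refine ⟨z, hz, hz1, ?_⟩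
          intro i' hi' hvi'
          rcases Finset.mem_insert.mp hi' with rfl | hi'
          · exact absurd hvi' hvi
          · exact hz0 i' hi' hvi'
    obtain ⟨z, hz, hz1, hz0⟩ := key Finset.univ
    have e : z = v := funext fun j => by
      cases hj : v j
      · exact hz0 j (Finset.mem_univ j) hj
      · exact hz1 j hj
    rwa [e] at hz
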